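/- Let V be a finite index set with finite state spaces X_v of size at least 2, p a strictly positive probability distribution on X_V, L ⊆ M ⊆ V nonempty, N = M ∖ L, and κ_{L|N}(x_L | x_N) = ∑_{A : L ⊆ A ⊆ M} λ_A^M(x_A). Then for every x_L ∈ X̃_L (i.e., with x_v ≤ |X_v| − 2 for all v ∈ L) and every x_N ∈ X_N, ∑_{A ⊆ L} (−1)^{|L∖A|} κ_{L|N}(x_L + 1_A | x_N) = ∑_{D ⊆ L} (−1)^{|D|} log p_{L|N}(x_L + 1_{L∖D} | x_N), where 1_A ∈ X_L has coordinate 1 at v ∈ A and 0 elsewhere, and p_{L|N}(x_L | x_N) = p_M(x_L, x_N)/p_N(x_N); i.e., the alternating sum of the κ's equals the local |L|-way log-linear interaction of the conditional distribution of X_L given X_N = x_N. -/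

import Mathlib

open Finset

open scoped Classical

variable {V : Type} [Fintype V] [DecidableEq V]

/-- Joint state space: variable `v` takes values in `{0, …, d v + 1}`,
so each state space has size `d v + 2 ≥ 2`. -/
abbrev Config (V : Type) (d : V → ℕ) : Type := ∀ v : V, Fin (d v + 2)

/-- Marginal `p_M` of `p` on the margin `M`, as a function of a full configuration
(it depends only on the coordinates in `M`). -/
noncomputable def margin (d : V → ℕ) (p : Config V d → ℝ) (M : Finset V)
    (x : Config V d) : ℝ :=
  ∑ y : Config V d, if ∀ v ∈ M, y v = x v then p y else 0

/-- Marginal log-linear parameter `λ_L^M(x_L)`: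
`|X_M|⁻¹ ∑_{y_M ∈ X_M} log p_M(y_M) ∏_{v ∈ L} (|X_v|·1[x_v = y_v] − 1)`.
The sum over `y_M ∈ X_M` is realized by summing over full configurations `y`
that are `0` outside `M` (one representative for each `y_M`). -/
noncomputable def mll (d : V → ℕ) (p : Config V d → ℝ) (L M : Finset V)
    (x : Config V d) : ℝ :=
  (∏ v ∈ M, ((d v + 2 : ℕ) : ℝ))⁻¹ *
    ∑ y : Config V d,
      if ∀ v ∉ M, y v = 0 then
        Real.log (margin d p M y) *
          ∏ v ∈ L, (((d v + 2 : ℕ) : ℝ) * (if x v = y v then 1 else 0) - 1)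
      else 0

/-- Conditional independence `X_A ⊥ X_B | X_C [p]`:
`p_{A∪B∪C}(x) · p_C(x) = p_{A∪C}(x) · p_{B∪C}(x)` for all configurations. -/
def CondIndep (d : V → ℕ) (p : Config V d → ℝ) (A B C : Finset V) : Prop :=
  ∀ x : Config V d,
    margin d p (A ∪ B ∪ C) x * margin d p C x
      = margin d p (A ∪ C) x * margin d p (B ∪ C) x

set_option linter.unusedSectionVars false
set_option linter.unusedVariables false

lemma margin_pos (d : V → ℕ) (p : Config V d → ℝ) (hpos : ∀ x, 0 < p x)
    (M : Finset V) (x : Config V d) : 0 < margin d p M x := by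
  unfold margin
  refine Finset.sum_pos' (fun y _ => ?_) ⟨x, Finset.mem_univ x, ?_⟩
  · split
    · exact (hpos y).le
    · exact le_rfl
  · simpa using (hpos x)

lemma margin_congr (d : V → ℕ) (p : Config V d → ℝ) (M : Finset V)
    {x y : Config V d} (h : ∀ v ∈ M, x v = y v) :
    margin d p M x = margin d p M y := by
  unfold margin
  refine Finset.sum_congr rfl fun z _ => ?_
  congr 1
  simp only [eq_iff_iff]
  constructor <;> intro hz v hv
  · rw [hz v hv, ← h v hv]
  · rw [hz v hv, h v hv]

lemma alt_sum_prod (L : Finset V) (f g : V → ℝ) :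
    ∑ A ∈ L.powerset, (-1:ℝ)^(L.card - A.card) * ((∏ v ∈ A, f v) * ∏ v ∈ L \ A, g v)
      = ∏ v ∈ L, (f v - g v) := by
  have : ∀ v ∈ L, f v - g v = f v + (-g v) := fun v _ => by ring
  rw [Finset.prod_congr rfl this, Finset.prod_add]
  refine Finset.sum_congr rfl fun A hA => ?_
  rw [Finset.mem_powerset] at hA
  have : ∏ v ∈ L \ A, (-g v) = (-1:ℝ)^(L.card - A.card) * ∏ v ∈ L \ A, g v := by
    rw [← Finset.card_sdiff_of_subset hA, ← Finset.prod_const, ← Finset.prod_mul_distrib]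
    exact Finset.prod_congr rfl fun v _ => by ring
  rw [this]; ring

lemma sum_powerset_prod (t : V → ℝ) {L M : Finset V} (hLM : L ⊆ M) :
    ∑ B ∈ M.powerset.filter (fun B => L ⊆ B), ∏ v ∈ B, t v
      = (∏ v ∈ L, t v) * ∏ v ∈ M \ L, (1 + t v) := by
  have h1 : ∏ v ∈ M \ L, (1 + t v) = ∑ C ∈ (M \ L).powerset, ∏ v ∈ C, t v := by
    have : ∀ v ∈ M \ L, (1:ℝ) + t v = t v + 1 := fun v _ => by ring
    rw [Finset.prod_congr rfl this, Finset.prod_add]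
    simp
  rw [h1, Finset.mul_sum]
  refine Finset.sum_nbij' (fun B => B \ L) (fun C => L ∪ C) ?_ ?_ ?_ ?_ ?_
  · intro B hB
    simp only [Finset.mem_filter, Finset.mem_powerset] at hB ⊢
    exact Finset.sdiff_subset_sdiff hB.1 le_rfl
  · intro C hC
    simp only [Finset.mem_filter, Finset.mem_powerset] at hC ⊢
    exact ⟨Finset.union_subset hLM (hC.trans Finset.sdiff_subset), Finset.subset_union_left⟩
  · intro B hB
    simp only [Finset.mem_filter, Finset.mem_powerset] at hB
    exact Finset.union_sdiff_of_subset hB.2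
  · intro C hC
    simp only [Finset.mem_powerset] at hC
    have hd : Disjoint L C := Finset.disjoint_sdiff.mono_right hC
    rw [Finset.union_sdiff_cancel_left hd]
  · intro B hB
    simp only [Finset.mem_filter, Finset.mem_powerset] at hB
    rw [← Finset.prod_sdiff hB.2, mul_comm]

lemma kappa_eq (d : V → ℕ) (p : Config V d → ℝ) {L M : Finset V} (hLM : L ⊆ M)
    (z : Config V d) :
    ∑ B ∈ M.powerset.filter (fun B => L ⊆ B), mll d p B M z
      = (∏ v ∈ M, ((d v + 2 : ℕ) : ℝ))⁻¹ *
        ∑ y : Config V d,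
          if ∀ v ∉ M, y v = 0 then
            Real.log (margin d p M y) *
              ((∏ v ∈ L, (((d v + 2:ℕ):ℝ) * (if z v = y v then 1 else 0) - 1)) *
               ∏ v ∈ M \ L, (((d v + 2:ℕ):ℝ) * (if z v = y v then 1 else 0)))
          else 0 := by
  unfold mll
  rw [← Finset.mul_sum]
  congr 1
  rw [Finset.sum_comm]
  refine Finset.sum_congr rfl fun y _ => ?_
  by_cases hc : ∀ v ∉ M, y v = 0
  · simp only [if_pos hc, ← Finset.mul_sum]
    congr 1
    rw [sum_powerset_prod _ hLM]
    congr 1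
    exact Finset.prod_congr rfl fun v _ => by ring
  · simp [if_neg hc]

lemma sum_pin (d : V → ℕ) (p : Config V d → ℝ) {L M : Finset V} (hLM : L ⊆ M)
    (x : Config V d) {A : Finset V} (hA : A ⊆ L) :
    (∑ y : Config V d, if ∀ v ∉ M, y v = 0 then
        Real.log (margin d p M y) *
          ((∏ v ∈ A, (if x v + 1 = y v then (1:ℝ) else 0)) *
           (∏ v ∈ L \ A, (if x v = y v then (1:ℝ) else 0)) *
           ∏ v ∈ M \ L, (if x v = y v then (1:ℝ) else 0))
      else 0)
    = Real.log (margin d p M (fun v => if v ∈ A then x v + 1 else x v)) := by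
  classical
  set w : Config V d := fun v => if v ∈ A then x v + 1 else if v ∈ M then x v else 0 with hw
  have hwM : ∀ v ∈ M, w v = (fun v => if v ∈ A then x v + 1 else x v) v := by
    intro v hv
    simp only [hw]
    by_cases h : v ∈ A <;> simp [h, hv]
  rw [Fintype.sum_eq_single w]
  · have hc : ∀ v ∉ M, w v = 0 := by
      intro v hv
      have : v ∉ A := fun h => hv (hLM (hA h))
      simp [hw, this, hv]
    rw [if_pos hc]
    have e1 : ∏ v ∈ A, (if x v + 1 = w v then (1:ℝ) else 0) = 1 :=
      Finset.prod_eq_one fun v hv => by simp [hw, hv]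
    have e2 : ∏ v ∈ L \ A, (if x v = w v then (1:ℝ) else 0) = 1 :=
      Finset.prod_eq_one fun v hv => by
        rw [Finset.mem_sdiff] at hv
        simp [hw, hv.2, hLM hv.1]
    have e3 : ∏ v ∈ M \ L, (if x v = w v then (1:ℝ) else 0) = 1 :=
      Finset.prod_eq_one fun v hv => by
        rw [Finset.mem_sdiff] at hv
        have : v ∉ A := fun h => hv.2 (hA h)
        simp [hw, this, hv.1]
    rw [e1, e2, e3, margin_congr d p M hwM]
    ring
  · intro y hy
    obtain ⟨v, hv⟩ := Function.ne_iff.mp hy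
    by_cases hvM : v ∈ M
    · by_cases hc : ∀ v ∉ M, y v = 0
      · rw [if_pos hc]
        by_cases hvA : v ∈ A
        · have : (if x v + 1 = y v then (1:ℝ) else 0) = 0 := by
            rw [if_neg]
            intro h
            exact hv (by simp [hw, hvA, ← h])
          rw [Finset.prod_eq_zero hvA this]
          ring
        · have hxy : (if x v = y v then (1:ℝ) else 0) = 0 := by
            rw [if_neg]
            intro h
            exact hv (by simp [hw, hvA, hvM, ← h])
          by_cases hvL : v ∈ L
          · rw [Finset.prod_eq_zero (Finset.mem_sdiff.mpr ⟨hvL, hvA⟩) hxy]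
            ring
          · rw [Finset.prod_eq_zero (Finset.mem_sdiff.mpr ⟨hvM, hvL⟩) hxy]
            ring
      · rw [if_neg hc]
    · by_cases hc : ∀ v ∉ M, y v = 0
      · exfalso
        have : v ∉ A := fun h => hvM (hLM (hA h))
        exact hv (by rw [hc v hvM]; simp [hw, this, hvM])
      · rw [if_neg hc]

lemma main_inner (d : V → ℕ) {L M : Finset V} (hLM : L ⊆ M) (x y : Config V d) :
    ∑ A ∈ L.powerset, (-1:ℝ)^(L.card - A.card) *
      ((∏ v ∈ L, (((d v + 2:ℕ):ℝ) * (if (if v ∈ A then x v + 1 else x v) = y v then 1 else 0) - 1)) *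
       ∏ v ∈ M \ L, (((d v + 2:ℕ):ℝ) * (if (if v ∈ A then x v + 1 else x v) = y v then 1 else 0)))
    = (∏ v ∈ M, ((d v + 2:ℕ):ℝ)) *
      ∑ A ∈ L.powerset, (-1:ℝ)^(L.card - A.card) *
        ((∏ v ∈ A, (if x v + 1 = y v then (1:ℝ) else 0)) *
         (∏ v ∈ L \ A, (if x v = y v then (1:ℝ) else 0)) *
         ∏ v ∈ M \ L, (if x v = y v then (1:ℝ) else 0)) := by
  have key : ∀ A ∈ L.powerset,
      (-1:ℝ)^(L.card - A.card) *
        ((∏ v ∈ L, (((d v + 2:ℕ):ℝ) * (if (if v ∈ A then x v + 1 else x v) = y v then 1 else 0) - 1)) *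
         ∏ v ∈ M \ L, (((d v + 2:ℕ):ℝ) * (if (if v ∈ A then x v + 1 else x v) = y v then 1 else 0)))
      = ((-1:ℝ)^(L.card - A.card) *
          ((∏ v ∈ A, (((d v + 2:ℕ):ℝ) * (if x v + 1 = y v then (1:ℝ) else 0) - 1)) *
           ∏ v ∈ L \ A, (((d v + 2:ℕ):ℝ) * (if x v = y v then (1:ℝ) else 0) - 1))) *
        ∏ v ∈ M \ L, (((d v + 2:ℕ):ℝ) * (if x v = y v then (1:ℝ) else 0)) := by
    intro A hA
    rw [Finset.mem_powerset] at hA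
    have h1 : ∏ v ∈ L, (((d v + 2:ℕ):ℝ) * (if (if v ∈ A then x v + 1 else x v) = y v then 1 else 0) - 1)
        = (∏ v ∈ L \ A, (((d v + 2:ℕ):ℝ) * (if x v = y v then (1:ℝ) else 0) - 1)) *
          ∏ v ∈ A, (((d v + 2:ℕ):ℝ) * (if x v + 1 = y v then (1:ℝ) else 0) - 1) := by
      rw [← Finset.prod_sdiff hA]
      congr 1
      · refine Finset.prod_congr rfl fun v hv => ?_
        rw [Finset.mem_sdiff] at hv
        simp [hv.2]
      · exact Finset.prod_congr rfl fun v hv => by simp [hv]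
    have h2 : ∏ v ∈ M \ L, (((d v + 2:ℕ):ℝ) * (if (if v ∈ A then x v + 1 else x v) = y v then (1:ℝ) else 0))
        = ∏ v ∈ M \ L, (((d v + 2:ℕ):ℝ) * (if x v = y v then (1:ℝ) else 0)) := by
      refine Finset.prod_congr rfl fun v hv => ?_
      rw [Finset.mem_sdiff] at hv
      have : v ∉ A := fun h => hv.2 (hA h)
      simp [this]
    rw [h1, h2]; ring
  rw [Finset.sum_congr rfl key, ← Finset.sum_mul, alt_sum_prod]
  have h3 : ∏ v ∈ L, ((((d v + 2:ℕ):ℝ) * (if x v + 1 = y v then (1:ℝ) else 0) - 1) -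
        (((d v + 2:ℕ):ℝ) * (if x v = y v then (1:ℝ) else 0) - 1))
      = (∏ v ∈ L, ((d v + 2:ℕ):ℝ)) *
        ∏ v ∈ L, ((if x v + 1 = y v then (1:ℝ) else 0) - (if x v = y v then (1:ℝ) else 0)) := by
    rw [← Finset.prod_mul_distrib]
    exact Finset.prod_congr rfl fun v _ => by ring
  have h4 : ∏ v ∈ M \ L, (((d v + 2:ℕ):ℝ) * (if x v = y v then (1:ℝ) else 0))
      = (∏ v ∈ M \ L, ((d v + 2:ℕ):ℝ)) * ∏ v ∈ M \ L, (if x v = y v then (1:ℝ) else 0) :=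
    Finset.prod_mul_distrib
  rw [h3, h4, ← alt_sum_prod L (fun v => if x v + 1 = y v then (1:ℝ) else 0)
      (fun v => if x v = y v then (1:ℝ) else 0),
    ← Finset.prod_sdiff hLM (f := fun v => ((d v + 2:ℕ):ℝ))]
  have h5 : ∑ A ∈ L.powerset, (-1:ℝ)^(L.card - A.card) *
        ((∏ v ∈ A, (if x v + 1 = y v then (1:ℝ) else 0)) *
         (∏ v ∈ L \ A, (if x v = y v then (1:ℝ) else 0)) *
         ∏ v ∈ M \ L, (if x v = y v then (1:ℝ) else 0))
      = (∑ A ∈ L.powerset, (-1:ℝ)^(L.card - A.card) *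
          ((∏ v ∈ A, (if x v + 1 = y v then (1:ℝ) else 0)) *
           ∏ v ∈ L \ A, (if x v = y v then (1:ℝ) else 0))) *
        ∏ v ∈ M \ L, (if x v = y v then (1:ℝ) else 0) := by
    rw [Finset.sum_mul]
    exact Finset.sum_congr rfl fun A _ => by ring
  rw [h5]; ring


/-- with `κ_{L|N}(x_L | x_N) = ∑_{L ⊆ A ⊆ M} λ_A^M(x_A)` and `N = M ∖ L`,
for `x_L ∈ X̃_L` (no coordinate in `L` takes its top value) the alternating sum
`∑_{A ⊆ L} (−1)^{|L∖A|} κ_{L|N}(x_L + 1_A | x_N)` equals the local `|L|`-way log-linear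
interaction `∑_{D ⊆ L} (−1)^{|D|} log p_{L|N}(x_L + 1_{L∖D} | x_N)` of the conditional
distribution of `X_L` given `X_N = x_N`, where `p_{L|N}(x_L | x_N) = p_M(x_L, x_N)/p_N(x_N)`. -/
theorem kappa_alternating_sum (d : V → ℕ) (p : Config V d → ℝ)
    (hpos : ∀ x, 0 < p x) (hsum : ∑ x, p x = 1)
    (L M : Finset V) (hL : L.Nonempty) (hLM : L ⊆ M) (x : Config V d)
    (hx : ∀ v ∈ L, (x v : ℕ) + 1 < d v + 2) :
    ∑ A ∈ L.powerset, (-1 : ℝ) ^ (L.card - A.card) *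
        (∑ B ∈ M.powerset.filter (fun B => L ⊆ B),
          mll d p B M (fun v => if v ∈ A then x v + 1 else x v))
      = ∑ D ∈ L.powerset, (-1 : ℝ) ^ D.card *
          Real.log
            (margin d p M (fun v => if v ∈ L \ D then x v + 1 else x v) /
              margin d p (M \ L) x) := by
  classical
  have hM0 : (∏ v ∈ M, ((d v + 2:ℕ):ℝ)) ≠ 0 :=
    Finset.prod_ne_zero_iff.mpr fun v _ => by positivity
  -- Reduce the RHS
  have hsignzero : ∑ D ∈ L.powerset, (-1:ℝ)^D.card = 0 := by
    have := Finset.prod_add (fun _ => (-1:ℝ)) (fun _ => (1:ℝ)) L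
    simp only [neg_add_cancel, Finset.prod_const, Finset.prod_const_one, mul_one,
      one_pow] at this
    rw [← this, zero_pow hL.card_pos.ne']
  have hRHS : ∑ D ∈ L.powerset, (-1 : ℝ) ^ D.card *
          Real.log
            (margin d p M (fun v => if v ∈ L \ D then x v + 1 else x v) /
              margin d p (M \ L) x)
      = ∑ A ∈ L.powerset, (-1:ℝ)^(L.card - A.card) *
          Real.log (margin d p M (fun v => if v ∈ A then x v + 1 else x v)) := by
    have step1 : ∀ D ∈ L.powerset, (-1 : ℝ) ^ D.card *
          Real.log
            (margin d p M (fun v => if v ∈ L \ D then x v + 1 else x v) /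
              margin d p (M \ L) x)
        = (-1:ℝ)^D.card * Real.log (margin d p M (fun v => if v ∈ L \ D then x v + 1 else x v))
          - (-1:ℝ)^D.card * Real.log (margin d p (M \ L) x) := by
      intro D _
      rw [Real.log_div (margin_pos d p hpos M _).ne' (margin_pos d p hpos (M \ L) x).ne']
      ring
    rw [Finset.sum_congr rfl step1, Finset.sum_sub_distrib, ← Finset.sum_mul, hsignzero,
      zero_mul, sub_zero]
    refine Finset.sum_nbij' (fun D => L \ D) (fun A => L \ A) ?_ ?_ ?_ ?_ ?_
    · intro D _; exact Finset.mem_powerset.mpr Finset.sdiff_subset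
    · intro A _; exact Finset.mem_powerset.mpr Finset.sdiff_subset
    · intro D hD
      exact Finset.sdiff_sdiff_eq_self (Finset.mem_powerset.mp hD)
    · intro A hA
      exact Finset.sdiff_sdiff_eq_self (Finset.mem_powerset.mp hA)
    · intro D hD
      rw [Finset.mem_powerset] at hD
      rw [Finset.card_sdiff_of_subset hD]
      have := Finset.card_le_card hD
      congr 2
      omega
  rw [hRHS]
  -- Reduce the LHS
  calc ∑ A ∈ L.powerset, (-1 : ℝ) ^ (L.card - A.card) *
        (∑ B ∈ M.powerset.filter (fun B => L ⊆ B),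
          mll d p B M (fun v => if v ∈ A then x v + 1 else x v))
      = (∏ v ∈ M, ((d v + 2:ℕ):ℝ))⁻¹ * ∑ A ∈ L.powerset, ∑ y : Config V d,
          (-1:ℝ)^(L.card - A.card) *
            (if ∀ v ∉ M, y v = 0 then
              Real.log (margin d p M y) *
                ((∏ v ∈ L, (((d v + 2:ℕ):ℝ) * (if (if v ∈ A then x v + 1 else x v) = y v then 1 else 0) - 1)) *
                 ∏ v ∈ M \ L, (((d v + 2:ℕ):ℝ) * (if (if v ∈ A then x v + 1 else x v) = y v then 1 else 0)))
            else 0) := by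
        rw [Finset.mul_sum]
        refine Finset.sum_congr rfl fun A _ => ?_
        rw [kappa_eq d p hLM, ← Finset.mul_sum]
        ring
    _ = (∏ v ∈ M, ((d v + 2:ℕ):ℝ))⁻¹ * ∑ y : Config V d,
          if ∀ v ∉ M, y v = 0 then
            Real.log (margin d p M y) *
              ((∏ v ∈ M, ((d v + 2:ℕ):ℝ)) *
               ∑ A ∈ L.powerset, (-1:ℝ)^(L.card - A.card) *
                 ((∏ v ∈ A, (if x v + 1 = y v then (1:ℝ) else 0)) *
                  (∏ v ∈ L \ A, (if x v = y v then (1:ℝ) else 0)) *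
                  ∏ v ∈ M \ L, (if x v = y v then (1:ℝ) else 0)))
          else 0 := by
        congr 1
        rw [Finset.sum_comm]
        refine Finset.sum_congr rfl fun y _ => ?_
        by_cases hc : ∀ v ∉ M, y v = 0
        · simp only [if_pos hc]
          rw [← main_inner d hLM x y, Finset.mul_sum]
          exact Finset.sum_congr rfl fun A _ => by ring
        · simp [if_neg hc]
    _ = ∑ y : Config V d,
          if ∀ v ∉ M, y v = 0 then
            Real.log (margin d p M y) *
              ∑ A ∈ L.powerset, (-1:ℝ)^(L.card - A.card) *
                ((∏ v ∈ A, (if x v + 1 = y v then (1:ℝ) else 0)) *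
                 (∏ v ∈ L \ A, (if x v = y v then (1:ℝ) else 0)) *
                 ∏ v ∈ M \ L, (if x v = y v then (1:ℝ) else 0))
          else 0 := by
        rw [Finset.mul_sum]
        refine Finset.sum_congr rfl fun y _ => ?_
        by_cases hc : ∀ v ∉ M, y v = 0
        · simp only [if_pos hc]
          rw [show (∏ v ∈ M, ((d v + 2:ℕ):ℝ))⁻¹ *
            (Real.log (margin d p M y) * ((∏ v ∈ M, ((d v + 2:ℕ):ℝ)) *
              ∑ A ∈ L.powerset, (-1:ℝ)^(L.card - A.card) *
                ((∏ v ∈ A, (if x v + 1 = y v then (1:ℝ) else 0)) *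
                 (∏ v ∈ L \ A, (if x v = y v then (1:ℝ) else 0)) *
                 ∏ v ∈ M \ L, (if x v = y v then (1:ℝ) else 0)))) =
            ((∏ v ∈ M, ((d v + 2:ℕ):ℝ))⁻¹ * (∏ v ∈ M, ((d v + 2:ℕ):ℝ))) *
              (Real.log (margin d p M y) *
               ∑ A ∈ L.powerset, (-1:ℝ)^(L.card - A.card) *
                ((∏ v ∈ A, (if x v + 1 = y v then (1:ℝ) else 0)) *
                 (∏ v ∈ L \ A, (if x v = y v then (1:ℝ) else 0)) *
                 ∏ v ∈ M \ L, (if x v = y v then (1:ℝ) else 0))) from by ring,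
            inv_mul_cancel₀ hM0, one_mul]
        · simp [if_neg hc]
    _ = ∑ A ∈ L.powerset, (-1:ℝ)^(L.card - A.card) *
          ∑ y : Config V d,
            if ∀ v ∉ M, y v = 0 then
              Real.log (margin d p M y) *
                ((∏ v ∈ A, (if x v + 1 = y v then (1:ℝ) else 0)) *
                 (∏ v ∈ L \ A, (if x v = y v then (1:ℝ) else 0)) *
                 ∏ v ∈ M \ L, (if x v = y v then (1:ℝ) else 0))
            else 0 := by
        have swap : ∑ y : Config V d, ∑ A ∈ L.powerset,
            ((-1:ℝ)^(L.card - A.card) *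
              (if ∀ v ∉ M, y v = 0 then
                Real.log (margin d p M y) *
                  ((∏ v ∈ A, (if x v + 1 = y v then (1:ℝ) else 0)) *
                   (∏ v ∈ L \ A, (if x v = y v then (1:ℝ) else 0)) *
                   ∏ v ∈ M \ L, (if x v = y v then (1:ℝ) else 0))
              else 0))
            = ∑ A ∈ L.powerset, ∑ y : Config V d,
            ((-1:ℝ)^(L.card - A.card) *
              (if ∀ v ∉ M, y v = 0 then
                Real.log (margin d p M y) *
                  ((∏ v ∈ A, (if x v + 1 = y v then (1:ℝ) else 0)) *
                   (∏ v ∈ L \ A, (if x v = y v then (1:ℝ) else 0)) *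
                   ∏ v ∈ M \ L, (if x v = y v then (1:ℝ) else 0))
              else 0)) := Finset.sum_comm
        rw [show (∑ y : Config V d,
          if ∀ v ∉ M, y v = 0 then
            Real.log (margin d p M y) *
              ∑ A ∈ L.powerset, (-1:ℝ)^(L.card - A.card) *
                ((∏ v ∈ A, (if x v + 1 = y v then (1:ℝ) else 0)) *
                 (∏ v ∈ L \ A, (if x v = y v then (1:ℝ) else 0)) *
                 ∏ v ∈ M \ L, (if x v = y v then (1:ℝ) else 0))
          else 0) = ∑ y : Config V d, ∑ A ∈ L.powerset,
            ((-1:ℝ)^(L.card - A.card) *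
              (if ∀ v ∉ M, y v = 0 then
                Real.log (margin d p M y) *
                  ((∏ v ∈ A, (if x v + 1 = y v then (1:ℝ) else 0)) *
                   (∏ v ∈ L \ A, (if x v = y v then (1:ℝ) else 0)) *
                   ∏ v ∈ M \ L, (if x v = y v then (1:ℝ) else 0))
              else 0)) from ?_, swap]
        · exact Finset.sum_congr rfl fun A _ => by rw [Finset.mul_sum]
        · refine Finset.sum_congr rfl fun y _ => ?_
          by_cases hc : ∀ v ∉ M, y v = 0
          · simp only [if_pos hc]
            rw [Finset.mul_sum]
            exact Finset.sum_congr rfl fun A _ => by ring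
          · simp [if_neg hc]
    _ = ∑ A ∈ L.powerset, (-1:ℝ)^(L.card - A.card) *
          Real.log (margin d p M (fun v => if v ∈ A then x v + 1 else x v)) := by
        refine Finset.sum_congr rfl fun A hA => ?_
        rw [sum_pin d p hLM x (Finset.mem_powerset.mp hA)]
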